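/- Let T be a junction tree distribution and suppose separator S_j separates vertex i_m from subtree T_{m−1} (global Markov property), while S_i does not. Then I(X_{S_j}, X_{i_m}) − I(X_{S_j}) = I(X_{T_{m−1}}, X_{i_m}) − I(X_{T_{m−1}}) and I(X_{S_i}, X_{i_m}) − I(X_{S_i}) ≤ I(X_{T_{m−1}}, X_{i_m}) − I(X_{T_{m−1}}); consequently I(X_{S_i}, X_{i_m}) − I(X_{S_i}) ≤ I(X_{S_j}, X_{i_m}) − I(X_{S_j}). -/

import Mathlib

open scoped Classical BigOperators

namespace TCherryPaper
variable {d : ℕ} {Ω : Type} [Fintype Ω]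

/-- Marginal of `p` on coordinates `S`, evaluated at a full configuration `y`. -/
noncomputable def marg (p : (Fin d → Ω) → ℝ) (S : Finset (Fin d)) (y : Fin d → Ω) : ℝ :=
  ∑ x : Fin d → Ω, if ∀ i ∈ S, x i = y i then p x else 0

/-- Shannon entropy of the marginal of `p` on coordinates `S` (as `-E_p[log P(X_S)]`). -/
noncomputable def Hm (p : (Fin d → Ω) → ℝ) (S : Finset (Fin d)) : ℝ :=
  -∑ y : Fin d → Ω, p y * Real.log (marg p S y)

/-- Information content `I(X_S) = ∑_{i∈S} H(X_i) − H(X_S)`. -/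
noncomputable def info (p : (Fin d → Ω) → ℝ) (S : Finset (Fin d)) : ℝ :=
  (∑ i ∈ S, Hm p {i}) - Hm p S

/-- Kullback–Leibler divergence. -/
noncomputable def KL (p q : (Fin d → Ω) → ℝ) : ℝ :=
  ∑ y : Fin d → Ω, p y * Real.log (p y / q y)

def IsProb (p : (Fin d → Ω) → ℝ) : Prop := (∀ y, 0 ≤ p y) ∧ ∑ y, p y = 1

/-- The `j`-th running-intersection separator of an ordered list of clusters. -/
def sep (Cs : List (Finset (Fin d))) (j : ℕ) : Finset (Fin d) :=
  Cs.getD j ∅ ∩ (Cs.take j).foldr (· ∪ ·) ∅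

/-- Running intersection property. -/
def RIP (Cs : List (Finset (Fin d))) : Prop :=
  ∀ j, 1 ≤ j → j < Cs.length → ∃ i < j, sep Cs j ⊆ Cs.getD i ∅

/-- `𝒞` is the cluster set and `𝒮` the separator set of a junction tree. -/
def IsJunctionTree (𝒞 𝒮 : Finset (Finset (Fin d))) : Prop :=
  (∀ C₁ ∈ 𝒞, ∀ C₂ ∈ 𝒞, C₁ ⊆ C₂ → C₁ = C₂) ∧
  ∃ Cs : List (Finset (Fin d)), Cs ≠ [] ∧ Cs.Nodup ∧ Cs.toFinset = 𝒞 ∧ RIP Cs ∧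
    𝒮 = (((List.range Cs.length).filter (fun j => 1 ≤ j)).map (sep Cs)).toFinset

/-- `ν_S`: the number of clusters containing `S`. -/
def nu (𝒞 : Finset (Finset (Fin d))) (S : Finset (Fin d)) : ℕ :=
  (𝒞.filter (fun C => S ⊆ C)).card

/-- The junction tree probability distribution. -/
noncomputable def jtPD (p : (Fin d → Ω) → ℝ) (𝒞 𝒮 : Finset (Finset (Fin d)))
    (y : Fin d → Ω) : ℝ :=
  (∏ C ∈ 𝒞, marg p C y) / ∏ S ∈ 𝒮, (marg p S y) ^ (nu 𝒞 S - 1)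

/-- Conditional independence of `X_A` and `X_B` given `X_C`. -/
def CI (p : (Fin d → Ω) → ℝ) (A B C : Finset (Fin d)) : Prop :=
  ∀ y, marg p (A ∪ B ∪ C) y * marg p C y = marg p (A ∪ C) y * marg p (B ∪ C) y


section Aux
variable {p : (Fin d → Ω) → ℝ}

lemma le_marg (hp0 : ∀ y, 0 ≤ p y) (S : Finset (Fin d)) (y : Fin d → Ω) :
    p y ≤ marg p S y := by
  have h := Finset.single_le_sum
    (f := fun x : Fin d → Ω => if ∀ i ∈ S, x i = y i then p x else 0)
    (fun x _ => by split; exacts [hp0 x, le_rfl]) (Finset.mem_univ y)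
  simpa [marg] using h

lemma marg_pos (hppos : ∀ y, 0 < p y) (S : Finset (Fin d)) (y : Fin d → Ω) :
    0 < marg p S y :=
  lt_of_lt_of_le (hppos y) (le_marg (fun x => (hppos x).le) S y)

lemma marg_congr {S : Finset (Fin d)} {x y : Fin d → Ω} (h : ∀ i ∈ S, x i = y i) :
    marg p S x = marg p S y := by
  unfold marg
  refine Finset.sum_congr rfl fun u _ => ?_
  refine if_congr ⟨fun hu i hi => (hu i hi).trans (h i hi),
    fun hu i hi => (hu i hi).trans (h i hi).symm⟩ rfl rfl

lemma marg_update_sum {m : Fin d} {S : Finset (Fin d)} (hm : m ∉ S) (y : Fin d → Ω) :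
    ∑ a : Ω, marg p (insert m S) (Function.update y m a) = marg p S y := by
  unfold marg
  rw [Finset.sum_comm]
  refine Finset.sum_congr rfl fun x _ => ?_
  have hcond : ∀ a : Ω, (∀ i ∈ insert m S, x i = Function.update y m a i) ↔
      (a = x m ∧ ∀ i ∈ S, x i = y i) := by
    intro a
    rw [Finset.forall_mem_insert]
    constructor
    · rintro ⟨h1, h2⟩
      refine ⟨by rw [h1, Function.update_self], fun i hi => ?_⟩
      have hne : i ≠ m := fun h => hm (h ▸ hi)
      rw [h2 i hi, Function.update_of_ne hne]
    · rintro ⟨h1, h2⟩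
      refine ⟨by rw [Function.update_self, h1], fun i hi => ?_⟩
      have hne : i ≠ m := fun h => hm (h ▸ hi)
      rw [Function.update_of_ne hne]
      exact h2 i hi
  calc ∑ a : Ω, (if ∀ i ∈ insert m S, x i = Function.update y m a i then p x else 0)
      = ∑ a : Ω, (if a = x m ∧ (∀ i ∈ S, x i = y i) then p x else 0) := by
        refine Finset.sum_congr rfl fun a _ => if_congr (hcond a) rfl rfl
    _ = if ∀ i ∈ S, x i = y i then p x else 0 := by
        simp only [ite_and]
        rw [Finset.sum_ite_eq' Finset.univ (x m)
          (fun _ => if (∀ i ∈ S, x i = y i) then p x else 0)]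
        simp

/-- Projection to coordinates in `A`. -/
def pr (A : Finset (Fin d)) (y : Fin d → Ω) : Fin d → Option Ω :=
  fun i => if i ∈ A then some (y i) else none

lemma pr_eq_iff {A : Finset (Fin d)} {x y : Fin d → Ω} :
    pr A x = pr A y ↔ ∀ i ∈ A, x i = y i := by
  constructor
  · intro h i hi
    have := congrFun h i
    simpa [pr, hi] using this
  · intro h
    funext i
    by_cases hi : i ∈ A
    · simp [pr, hi, h i hi]
    · simp [pr, hi]

/-- Fiber mass. -/
noncomputable def DD (p : (Fin d → Ω) → ℝ) (A : Finset (Fin d)) (z : Fin d → Option Ω) : ℝ :=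
  ∑ x : Fin d → Ω, if pr A x = z then p x else 0

/-- Canonical representative of a fiber. -/
def rep (ω₀ : Ω) (z : Fin d → Option Ω) : Fin d → Ω := fun i => (z i).getD ω₀

lemma marg_eq_DD (A : Finset (Fin d)) (y : Fin d → Ω) :
    marg p A y = DD p A (pr A y) := by
  unfold marg DD
  exact Finset.sum_congr rfl fun u _ => if_congr pr_eq_iff.symm rfl rfl

lemma pr_rep {ω₀ : Ω} {A : Finset (Fin d)} {x : Fin d → Ω} {z : Fin d → Option Ω}
    (hx : pr A x = z) : pr A (rep ω₀ z) = z := by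
  subst hx
  funext i
  by_cases hi : i ∈ A <;> simp [pr, rep, hi]

lemma sum_group (A : Finset (Fin d)) (H : (Fin d → Ω) → ℝ) :
    ∑ y, H y = ∑ z : Fin d → Option Ω, ∑ y, if pr A y = z then H y else 0 := by
  rw [Finset.sum_comm]
  refine Finset.sum_congr rfl fun y _ => ?_
  rw [Finset.sum_ite_eq Finset.univ (pr A y) (fun _ => H y)]
  simp

lemma fiber_collapse (A : Finset (Fin d)) (g : (Fin d → Ω) → ℝ)
    (hgc : ∀ x y, pr A x = pr A y → g x = g y) (ω₀ : Ω) :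
    ∑ y, p y * g y / marg p A y
      = ∑ z : Fin d → Option Ω, g (rep ω₀ z) * (DD p A z / DD p A z) := by
  rw [sum_group A (fun y => p y * g y / marg p A y)]
  refine Finset.sum_congr rfl fun z _ => ?_
  have hterm : ∀ x : Fin d → Ω, (if pr A x = z then p x * g x / marg p A x else 0)
      = g (rep ω₀ z) * ((if pr A x = z then p x else 0) / DD p A z) := by
    intro x
    by_cases hx : pr A x = z
    · rw [if_pos hx, if_pos hx, marg_eq_DD A x, hx,
        hgc x (rep ω₀ z) (hx.trans (pr_rep hx).symm)]
      ring
    · rw [if_neg hx, if_neg hx]; simp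
  rw [Finset.sum_congr rfl (fun x _ => hterm x), ← Finset.mul_sum, ← Finset.sum_div]
  rfl

lemma key_sum (hp1 : ∑ y, p y = 1) (hppos : ∀ y, 0 < p y) {T Si : Finset (Fin d)} {m : Fin d}
    (hm : m ∉ T) (hSi : Si ⊆ T) :
    ∑ y, p y * (marg p T y * marg p (insert m Si) y / marg p Si y)
      / marg p (insert m T) y = 1 := by
  classical
  have hmSi : m ∉ Si := fun h => hm (hSi h)
  have hne : Nonempty (Fin d → Ω) := by
    by_contra h
    rw [not_nonempty_iff] at h
    rw [Finset.univ_eq_empty, Finset.sum_empty] at hp1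
    norm_num at hp1
  obtain ⟨y0⟩ := hne
  set ω₀ : Ω := y0 m with hω₀
  have hmA : m ∈ insert m T := Finset.mem_insert_self m T
  have hsubT : T ⊆ insert m T := Finset.subset_insert m T
  have hsubSi : Si ⊆ insert m T := hSi.trans hsubT
  have hsubmSi : insert m Si ⊆ insert m T := Finset.insert_subset_insert m hSi
  have hgc : ∀ x y : Fin d → Ω, pr (insert m T) x = pr (insert m T) y →
      marg p T x * marg p (insert m Si) x / marg p Si x
        = marg p T y * marg p (insert m Si) y / marg p Si y := by
    intro x y hxy
    rw [pr_eq_iff] at hxy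
    rw [marg_congr (fun i hi => hxy i (hsubT hi)),
        marg_congr (fun i hi => hxy i (hsubmSi hi)),
        marg_congr (fun i hi => hxy i (hsubSi hi))]
  rw [fiber_collapse (insert m T)
    (fun u => marg p T u * marg p (insert m Si) u / marg p Si u) hgc ω₀]
  have hone : (1:ℝ) = ∑ z : Fin d → Option Ω, DD p (insert m T) z := by
    rw [← hp1, sum_group (insert m T) p]
    rfl
  rw [hone]
  -- reindex both sums over (Option Ω) × ({j // j ≠ m} → Option Ω)
  set e := Equiv.funSplitAt m (Option Ω) with he
  have hsplit : ∀ H : (Fin d → Option Ω) → ℝ,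
      ∑ z, H z = ∑ w : {j : Fin d // j ≠ m} → Option Ω, ∑ b : Option Ω, H (e.symm (b, w)) := by
    intro H
    rw [← Equiv.sum_comp e.symm H, Fintype.sum_prod_type]
    exact Finset.sum_comm
  have hsm : ∀ (b : Option Ω) (w), (e.symm (b, w)) m = b := by
    intro b w; simp [he]
  have hsi : ∀ (b : Option Ω) (w) (i : Fin d) (h : i ≠ m), (e.symm (b, w)) i = w ⟨i, h⟩ := by
    intro b w i h; simp [he, h]
  rw [hsplit, hsplit]
  refine Finset.sum_congr rfl fun w _ => ?_
  -- the `none` term is zero on both sides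
  have hDDnone : DD p (insert m T) (e.symm (none, w)) = 0 := by
    refine Finset.sum_eq_zero fun x _ => ?_
    rw [if_neg]
    intro hx
    have := congrFun hx m
    rw [hsm none w] at this
    simp [pr, hmA] at this
  rw [Fintype.sum_option, Fintype.sum_option, hDDnone]
  simp only [mul_zero, zero_div, mul_zero, zero_add]
  -- now the `some` sums
  by_cases hex : ∃ (a : Ω) (x : Fin d → Ω), pr (insert m T) x = e.symm (some a, w)
  · obtain ⟨a0, x, hx⟩ := hex
    have hxa : ∀ a : Ω, pr (insert m T) (Function.update x m a) = e.symm (some a, w) := by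
      intro a
      funext i
      by_cases him : i = m
      · subst him
        rw [hsm]
        simp [pr, hmA]
      · have h1 : pr (insert m T) (Function.update x m a) i = pr (insert m T) x i := by
          simp [pr, Function.update_of_ne him]
        rw [h1, hx, hsi (some a0) w i him, hsi (some a) w i him]
    have hDDa : ∀ a : Ω, DD p (insert m T) (e.symm (some a, w))
        = marg p (insert m T) (Function.update x m a) := by
      intro a
      rw [marg_eq_DD, hxa a]
    have hrepa : ∀ a : Ω, marg p T (rep ω₀ (e.symm (some a, w)))
          * marg p (insert m Si) (rep ω₀ (e.symm (some a, w)))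
          / marg p Si (rep ω₀ (e.symm (some a, w)))
        = marg p T x * marg p (insert m Si) (Function.update x m a) / marg p Si x := by
      intro a
      have h1 := hgc (rep ω₀ (e.symm (some a, w))) (Function.update x m a)
        (by rw [pr_rep (hxa a), hxa a])
      have hT : ∀ i ∈ T, Function.update x m a i = x i := fun i hi =>
        Function.update_of_ne (show i ≠ m from fun hh => hm (by rw [← hh]; exact hi)) a x
      have hSi' : ∀ i ∈ Si, Function.update x m a i = x i := fun i hi =>
        Function.update_of_ne (show i ≠ m from fun hh => hmSi (by rw [← hh]; exact hi)) a x
      rw [h1, marg_congr hT, marg_congr hSi']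
    calc ∑ a : Ω, (marg p T (rep ω₀ (e.symm (some a, w)))
          * marg p (insert m Si) (rep ω₀ (e.symm (some a, w)))
          / marg p Si (rep ω₀ (e.symm (some a, w))))
          * (DD p (insert m T) (e.symm (some a, w)) / DD p (insert m T) (e.symm (some a, w)))
        = ∑ a : Ω, marg p T x * marg p (insert m Si) (Function.update x m a) / marg p Si x := by
          refine Finset.sum_congr rfl fun a _ => ?_
          rw [hrepa a, hDDa a, div_self (ne_of_gt (marg_pos hppos _ _)), mul_one]
      _ = marg p T x / marg p Si x * ∑ a : Ω, marg p (insert m Si) (Function.update x m a) := by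
          rw [Finset.mul_sum]
          refine Finset.sum_congr rfl fun a _ => by ring
      _ = marg p T x := by
          rw [marg_update_sum hmSi x,
            div_mul_cancel₀ _ (ne_of_gt (marg_pos hppos Si x))]
      _ = ∑ a : Ω, DD p (insert m T) (e.symm (some a, w)) := by
          rw [← marg_update_sum hm x]
          exact Finset.sum_congr rfl fun a _ => (hDDa a).symm
  · push_neg at hex
    have hDD0 : ∀ a : Ω, DD p (insert m T) (e.symm (some a, w)) = 0 := by
      intro a
      refine Finset.sum_eq_zero fun x _ => ?_
      rw [if_neg (hex a x)]
    refine Eq.trans (Finset.sum_eq_zero fun a _ => by rw [hDD0 a]; simp)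
      (Eq.symm (Finset.sum_eq_zero fun a _ => hDD0 a))

end Aux

/-- if the separator `S_j ⊆ T` separates the vertex `m ∉ T` from `T`
(global Markov property: `P(X_T, X_m) = P(X_T) P(X_{S_j}, X_m) / P(X_{S_j})`), while
`S_i ⊆ T` does not, then
`I(X_{S_j}, X_m) − I(X_{S_j}) = I(X_T, X_m) − I(X_T)`,
`I(X_{S_i}, X_m) − I(X_{S_i}) ≤ I(X_T, X_m) − I(X_T)`, and consequently
`I(X_{S_i}, X_m) − I(X_{S_i}) ≤ I(X_{S_j}, X_m) − I(X_{S_j})`. -/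
theorem separator_info_gain
    {d : ℕ} {Ω : Type} [Fintype Ω] (p : (Fin d → Ω) → ℝ)
    (hp : IsProb p) (hppos : ∀ y, 0 < p y)
    (T Sj Si : Finset (Fin d)) (m : Fin d) (hm : m ∉ T)
    (hSj : Sj ⊆ T) (hSi : Si ⊆ T)
    (hsep : ∀ y, marg p (insert m T) y = marg p T y * marg p (insert m Sj) y / marg p Sj y)
    (hnotsep : ¬ ∀ y,
      marg p (insert m T) y = marg p T y * marg p (insert m Si) y / marg p Si y) :
    info p (insert m Sj) - info p Sj = info p (insert m T) - info p T ∧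
    info p (insert m Si) - info p Si ≤ info p (insert m T) - info p T ∧
    info p (insert m Si) - info p Si ≤ info p (insert m Sj) - info p Sj := by
  classical
  obtain ⟨hp0, hp1⟩ := hp
  have hmSj : m ∉ Sj := fun h => hm (hSj h)
  have hmSi : m ∉ Si := fun h => hm (hSi h)
  have hpos : ∀ (S : Finset (Fin d)) (y : Fin d → Ω), 0 < marg p S y :=
    fun S y => marg_pos hppos S y
  -- Claim 1 (exact factorization ⇒ equality of conditional entropies)
  have c1 : Hm p T - Hm p (insert m T) = Hm p Sj - Hm p (insert m Sj) := by
    have hmain : Hm p (insert m T) = Hm p T + Hm p (insert m Sj) - Hm p Sj := by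
      unfold Hm
      have hterm : ∀ y : Fin d → Ω, p y * Real.log (marg p (insert m T) y)
          = p y * Real.log (marg p T y) + p y * Real.log (marg p (insert m Sj) y)
            - p y * Real.log (marg p Sj y) := by
        intro y
        rw [hsep y,
          Real.log_div (ne_of_gt (mul_pos (hpos T y) (hpos (insert m Sj) y)))
            (ne_of_gt (hpos Sj y)),
          Real.log_mul (ne_of_gt (hpos T y)) (ne_of_gt (hpos (insert m Sj) y))]
        ring
      rw [Finset.sum_congr rfl fun y _ => hterm y, Finset.sum_sub_distrib,
        Finset.sum_add_distrib]
      ring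
    linarith
  -- Claim 2 (KL nonnegativity ⇒ inequality of conditional entropies)
  have c2 : Hm p Si - Hm p (insert m Si) ≤ Hm p T - Hm p (insert m T) := by
    have key := key_sum hp1 hppos hm hSi
    have hlog : ∀ y : Fin d → Ω,
        p y * (Real.log (marg p (insert m Si) y) - Real.log (marg p Si y)
          + Real.log (marg p T y) - Real.log (marg p (insert m T) y))
        ≤ p y * (marg p T y * marg p (insert m Si) y / marg p Si y
            / marg p (insert m T) y) - p y := by
      intro y
      have hr : 0 < marg p T y * marg p (insert m Si) y / marg p Si y
          / marg p (insert m T) y :=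
        div_pos (div_pos (mul_pos (hpos T y) (hpos (insert m Si) y)) (hpos Si y))
          (hpos (insert m T) y)
      have hlog1 : Real.log (marg p (insert m Si) y) - Real.log (marg p Si y)
          + Real.log (marg p T y) - Real.log (marg p (insert m T) y)
          = Real.log (marg p T y * marg p (insert m Si) y / marg p Si y
              / marg p (insert m T) y) := by
        rw [Real.log_div
            (ne_of_gt (div_pos (mul_pos (hpos T y) (hpos (insert m Si) y)) (hpos Si y)))
            (ne_of_gt (hpos (insert m T) y)),
          Real.log_div (ne_of_gt (mul_pos (hpos T y) (hpos (insert m Si) y)))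
            (ne_of_gt (hpos Si y)),
          Real.log_mul (ne_of_gt (hpos T y)) (ne_of_gt (hpos (insert m Si) y))]
        ring
      rw [hlog1]
      have h1 := Real.log_le_sub_one_of_pos hr
      have h2 := mul_le_mul_of_nonneg_left h1 (hp0 y)
      have h3 : p y * (marg p T y * marg p (insert m Si) y / marg p Si y
          / marg p (insert m T) y - 1)
          = p y * (marg p T y * marg p (insert m Si) y / marg p Si y
            / marg p (insert m T) y) - p y := by ring
      linarith
    have hsum := Finset.sum_le_sum (fun y (_ : y ∈ Finset.univ) => hlog y)
    have hL : ∑ y : Fin d → Ω, p y * (Real.log (marg p (insert m Si) y)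
          - Real.log (marg p Si y) + Real.log (marg p T y)
          - Real.log (marg p (insert m T) y))
        = (Hm p Si - Hm p (insert m Si)) - (Hm p T - Hm p (insert m T)) := by
      unfold Hm
      have hterm : ∀ y : Fin d → Ω, p y * (Real.log (marg p (insert m Si) y)
            - Real.log (marg p Si y) + Real.log (marg p T y)
            - Real.log (marg p (insert m T) y))
          = p y * Real.log (marg p (insert m Si) y) - p y * Real.log (marg p Si y)
            + p y * Real.log (marg p T y) - p y * Real.log (marg p (insert m T) y) :=
        fun y => by ring
      rw [Finset.sum_congr rfl fun y _ => hterm y, Finset.sum_sub_distrib,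
        Finset.sum_add_distrib, Finset.sum_sub_distrib]
      ring
    have hR : ∑ y : Fin d → Ω, (p y * (marg p T y * marg p (insert m Si) y / marg p Si y
          / marg p (insert m T) y) - p y) = 0 := by
      rw [Finset.sum_sub_distrib, hp1]
      have hterm : ∀ y : Fin d → Ω, p y * (marg p T y * marg p (insert m Si) y
            / marg p Si y / marg p (insert m T) y)
          = p y * (marg p T y * marg p (insert m Si) y / marg p Si y)
            / marg p (insert m T) y := fun y => by ring
      rw [Finset.sum_congr rfl fun y _ => hterm y, key]
      ring
    rw [hL, hR] at hsum
    linarith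
  -- reduce `info` differences to entropies
  have hinfo : ∀ (S : Finset (Fin d)), m ∉ S →
      info p (insert m S) - info p S = Hm p {m} + Hm p S - Hm p (insert m S) := by
    intro S hS
    unfold info
    rw [Finset.sum_insert hS]
    ring
  have hT := hinfo T hm
  have hSj' := hinfo Sj hmSj
  have hSi' := hinfo Si hmSi
  refine ⟨by linarith, by linarith, by linarith⟩


end TCherryPaper
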